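/- Combining the previous estimates: if x⁺ = (K*K)^ν z with ‖z‖ ≤ E and x_{α(δ)}^δ = R_{α(δ)} y^δ with the modified filter and α(δ) = c(δ/E)^(σr/(2ν+1)), then ‖x_{α(δ)}^δ − x⁺‖ ≤ (c^(−1/(σr)) + c^(2ν/(σr)))·E^(1/(2ν+1))·δ^(2ν/(2ν+1)), i.e. the error is O(δ^(2ν/(2ν+1))) as δ → 0. -/

import Mathlib

open scoped InnerProductSpace

lemma ortho_summable {X : Type*} [NormedAddCommGroup X] [InnerProductSpace ℝ X] [CompleteSpace X]
    {v : ℕ → X} (hv : Orthonormal ℝ v) {c : ℕ → ℝ} (hc : Summable (fun i => c i ^ 2)) :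
    Summable (fun i => c i • v i) := by
  have hF := hv.orthogonalFamily
  have := (hF.summable_iff_norm_sq_summable c).mpr (by simpa [Real.norm_eq_abs, sq_abs] using hc)
  simpa [LinearIsometry.toSpanSingleton_apply] using this

lemma ortho_norm_sq {X : Type*} [NormedAddCommGroup X] [InnerProductSpace ℝ X] [CompleteSpace X]
    {v : ℕ → X} (hv : Orthonormal ℝ v) {c : ℕ → ℝ} (hc : Summable (fun i => c i ^ 2)) :
    ‖∑' i, c i • v i‖ ^ 2 = ∑' i, c i ^ 2 := by
  have hF := hv.orthogonalFamily
  have hsum : HasSum (fun i => c i • v i) (∑' i, c i • v i) := (ortho_summable hv hc).hasSum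
  have h1 : Filter.Tendsto (fun s : Finset ℕ => ‖∑ i ∈ s, c i • v i‖ ^ 2)
      Filter.atTop (nhds (‖∑' i, c i • v i‖ ^ 2)) :=
    ((continuous_norm.pow 2).continuousAt).tendsto.comp hsum
  have h2 : Filter.Tendsto (fun s : Finset ℕ => ‖∑ i ∈ s, c i • v i‖ ^ 2)
      Filter.atTop (nhds (∑' i, c i ^ 2)) := by
    have : ∀ s : Finset ℕ, ‖∑ i ∈ s, c i • v i‖ ^ 2 = ∑ i ∈ s, c i ^ 2 := by
      intro s
      have := hF.norm_sum c s
      simpa [LinearIsometry.toSpanSingleton_apply, Real.norm_eq_abs, sq_abs] using this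
    simp only [this]
    exact hc.hasSum
  exact tendsto_nhds_unique h1 h2

lemma ortho_inner_tsum {X : Type*} [NormedAddCommGroup X] [InnerProductSpace ℝ X] [CompleteSpace X]
    {v : ℕ → X} (hv : Orthonormal ℝ v) {c : ℕ → ℝ} (hc : Summable (fun i => c i • v i)) (i : ℕ) :
    ⟪(∑' j, c j • v j), v i⟫_ℝ = c i := by
  rw [real_inner_comm]
  have : ⟪v i, ∑' j, c j • v j⟫_ℝ = ∑' j, ⟪v i, c j • v j⟫_ℝ :=
    ((innerSL ℝ (v i)).map_tsum hc)
  rw [this, tsum_eq_single i]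
  · simp [real_inner_smul_right, hv.1 i, real_inner_self_eq_norm_sq]
  · intro j hj
    simp [real_inner_smul_right, hv.2 (Ne.symm hj)]

lemma qfilter_nonneg {σ r α m : ℝ} (hα : 0 < α) (hm : 0 < m) :
    0 ≤ (if α ≤ m ^ (σ * r) then (1:ℝ) else m ^ σ / (α + m ^ (σ * r)) ^ (1 / r)) := by
  split_ifs
  · norm_num
  · positivity

lemma qfilter_le_one {σ r α m : ℝ} (hr : 0 < r) (hα : 0 < α) (hm : 0 < m) :
    (if α ≤ m ^ (σ * r) then (1:ℝ) else m ^ σ / (α + m ^ (σ * r)) ^ (1 / r)) ≤ 1 := by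
  split_ifs with h
  · exact le_refl 1
  · rw [div_le_one (by positivity)]
    have h1 : m ^ σ = (m ^ (σ * r)) ^ (1 / r) := by
      rw [← Real.rpow_mul hm.le]
      congr 1
      field_simp
    rw [h1]
    exact Real.rpow_le_rpow (by positivity) (by push_neg at h; linarith) (by positivity)

lemma qfilter_div_le {σ r α m : ℝ} (hσ : 1 ≤ σ) (hr : 0 < r) (hα : 0 < α) (hm : 0 < m) :
    (if α ≤ m ^ (σ * r) then (1:ℝ) else m ^ σ / (α + m ^ (σ * r)) ^ (1 / r)) / m
      ≤ α ^ (-(1 / (σ * r))) := by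
  have hσr : 0 < σ * r := by positivity
  have hαp : (0:ℝ) < α ^ (1 / (σ * r)) := Real.rpow_pos_of_pos hα _
  split_ifs with h
  · have hm' : α ^ (1 / (σ * r)) ≤ m := by
      have := Real.rpow_le_rpow hα.le h (by positivity : (0:ℝ) ≤ 1 / (σ * r))
      rwa [← Real.rpow_mul hm.le, mul_one_div, div_self hσr.ne', Real.rpow_one] at this
    rw [Real.rpow_neg hα.le, one_div]
    exact inv_anti₀ hαp hm'
  · push_neg at h
    have hD : α ^ (1 / r) ≤ (α + m ^ (σ * r)) ^ (1 / r) :=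
      Real.rpow_le_rpow hα.le (by linarith [Real.rpow_pos_of_pos hm (σ * r)]) (by positivity)
    have hnum : m ^ σ / m = m ^ (σ - 1) := by
      rw [Real.rpow_sub hm, Real.rpow_one]
    have hbd : m ^ (σ - 1) ≤ α ^ ((σ - 1) / (σ * r)) := by
      have h1 : m ^ (σ - 1) = (m ^ (σ * r)) ^ ((σ - 1) / (σ * r)) := by
        rw [← Real.rpow_mul hm.le]
        congr 1
        field_simp
      rw [h1]
      exact Real.rpow_le_rpow (by positivity) h.le (div_nonneg (by linarith) hσr.le)
    calc (m ^ σ / (α + m ^ (σ * r)) ^ (1 / r)) / m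
        = (m ^ σ / m) / (α + m ^ (σ * r)) ^ (1 / r) := by ring
      _ ≤ α ^ ((σ - 1) / (σ * r)) / α ^ (1 / r) := by
          rw [hnum]
          exact div_le_div₀ (by positivity) hbd (by positivity) hD
      _ = α ^ ((σ - 1) / (σ * r) - 1 / r) := by rw [← Real.rpow_sub hα]
      _ = α ^ (-(1 / (σ * r))) := by
          congr 1
          field_simp
          ring

lemma qfilter_sub_one_le {σ r ν α m : ℝ} (hr : 0 < r) (hν : 0 < ν) (hσ : 1 ≤ σ)
    (hα : 0 < α) (hm : 0 < m) :
    (1 - (if α ≤ m ^ (σ * r) then (1:ℝ) else m ^ σ / (α + m ^ (σ * r)) ^ (1 / r))) * m ^ (2 * ν)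
      ≤ α ^ (2 * ν / (σ * r)) := by
  have hσr : 0 < σ * r := by positivity
  split_ifs with h
  · simp
    positivity
  · push_neg at h
    have h1 : (1 - m ^ σ / (α + m ^ (σ * r)) ^ (1 / r)) ≤ 1 := by
      have : 0 ≤ m ^ σ / (α + m ^ (σ * r)) ^ (1 / r) := by positivity
      linarith
    have h2 : m ^ (2 * ν) ≤ α ^ (2 * ν / (σ * r)) := by
      have he : m ^ (2 * ν) = (m ^ (σ * r)) ^ (2 * ν / (σ * r)) := by
        rw [← Real.rpow_mul hm.le]
        congr 1
        field_simp
      rw [he]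
      exact Real.rpow_le_rpow (by positivity) h.le (by positivity)
    calc (1 - m ^ σ / (α + m ^ (σ * r)) ^ (1 / r)) * m ^ (2 * ν)
        ≤ 1 * m ^ (2 * ν) := mul_le_mul_of_nonneg_right h1 (by positivity)
      _ = m ^ (2 * ν) := one_mul _
      _ ≤ α ^ (2 * ν / (σ * r)) := h2

lemma arith1 {σ r ν E δ c : ℝ} (hσ : 1 ≤ σ) (hr : 0 < r) (hν : 0 < ν)
    (hE : 0 < E) (hδ : 0 < δ) (hc : 0 < c) :
    (c * (δ / E) ^ (σ * r / (2 * ν + 1))) ^ (-(1 / (σ * r))) * δ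
      = c ^ (-(1 / (σ * r))) * E ^ (1 / (2 * ν + 1)) * δ ^ (2 * ν / (2 * ν + 1)) := by
  have hσr : 0 < σ * r := by positivity
  have hde : 0 < δ / E := by positivity
  have h2ν : (0:ℝ) < 2 * ν + 1 := by linarith
  rw [Real.mul_rpow hc.le (by positivity), ← Real.rpow_mul hde.le]
  have he : σ * r / (2 * ν + 1) * (-(1 / (σ * r))) = -(1 / (2 * ν + 1)) := by
    field_simp
  rw [he, Real.rpow_neg hde.le, Real.div_rpow hδ.le hE.le]
  have hδs : δ / δ ^ (1 / (2 * ν + 1)) = δ ^ (2 * ν / (2 * ν + 1)) := by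
    rw [show δ / δ ^ (1 / (2 * ν + 1)) = δ ^ (1:ℝ) / δ ^ (1 / (2 * ν + 1)) by
      rw [Real.rpow_one], ← Real.rpow_sub hδ]
    congr 1
    field_simp
    ring
  have key : (δ ^ (1 / (2 * ν + 1)) / E ^ (1 / (2 * ν + 1)))⁻¹ * δ
      = E ^ (1 / (2 * ν + 1)) * δ ^ (2 * ν / (2 * ν + 1)) := by
    rw [inv_div, div_mul_eq_mul_div, mul_div_assoc, hδs]
  rw [mul_assoc, key, ← mul_assoc]

lemma arith2 {σ r ν E δ c : ℝ} (hσ : 1 ≤ σ) (hr : 0 < r) (hν : 0 < ν)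
    (hE : 0 < E) (hδ : 0 < δ) (hc : 0 < c) :
    (c * (δ / E) ^ (σ * r / (2 * ν + 1))) ^ (2 * ν / (σ * r)) * E
      = c ^ (2 * ν / (σ * r)) * E ^ (1 / (2 * ν + 1)) * δ ^ (2 * ν / (2 * ν + 1)) := by
  have hσr : 0 < σ * r := by positivity
  have hde : 0 < δ / E := by positivity
  have h2ν : (0:ℝ) < 2 * ν + 1 := by linarith
  rw [Real.mul_rpow hc.le (by positivity), ← Real.rpow_mul hde.le]
  have he : σ * r / (2 * ν + 1) * (2 * ν / (σ * r)) = 2 * ν / (2 * ν + 1) := by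
    field_simp
  rw [he, Real.div_rpow hδ.le hE.le]
  have hEs : E / E ^ (2 * ν / (2 * ν + 1)) = E ^ (1 / (2 * ν + 1)) := by
    rw [show E / E ^ (2 * ν / (2 * ν + 1)) = E ^ (1:ℝ) / E ^ (2 * ν / (2 * ν + 1)) by
      rw [Real.rpow_one], ← Real.rpow_sub hE]
    congr 1
    field_simp
    ring
  have key : δ ^ (2 * ν / (2 * ν + 1)) / E ^ (2 * ν / (2 * ν + 1)) * E
      = E ^ (1 / (2 * ν + 1)) * δ ^ (2 * ν / (2 * ν + 1)) := by
    rw [div_mul_eq_mul_div, mul_div_assoc, hEs, mul_comm]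
  rw [mul_assoc, key, ← mul_assoc]

lemma abs_sq_le {x y z : ℝ} (h : |x| ≤ y * |z|) : x ^ 2 ≤ y ^ 2 * z ^ 2 := by
  have := pow_le_pow_left₀ (abs_nonneg x) h 2
  simpa [mul_pow, sq_abs] using this

theorem stmt_13 {X Y : Type*} [NormedAddCommGroup X] [InnerProductSpace ℝ X] [CompleteSpace X]
    [NormedAddCommGroup Y] [InnerProductSpace ℝ Y] [CompleteSpace Y]
    (K : X →L[ℝ] Y) (hK : IsCompactOperator K)
    (μ : ℕ → ℝ) (xv : ℕ → X) (yv : ℕ → Y)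
    (hxv : Orthonormal ℝ xv) (hyv : Orthonormal ℝ yv)
    (hμ : ∀ i, 0 < μ i)
    (hKx : ∀ i, K (xv i) = μ i • yv i)
    (hKy : ∀ i, ContinuousLinearMap.adjoint K (yv i) = μ i • xv i)
    (σ r ν E δ c : ℝ) (hσ : 1 ≤ σ) (hr : 0 < r) (hν : 0 < ν)
    (hE : 0 < E) (hδ : 0 < δ) (hc : 0 < c)
    (q : ℝ → ℝ → ℝ)
    (hq : ∀ α m : ℝ, q α m =
      if α ≤ m ^ (σ * r) then 1 else m ^ σ / (α + m ^ (σ * r)) ^ (1 / r))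
    (αδ : ℝ) (hαδ : αδ = c * (δ / E) ^ (σ * r / (2 * ν + 1)))
    (R : ℝ → Y → X)
    (hR : ∀ α : ℝ, ∀ w : Y,
      R α w = ∑' i : ℕ, (q α (μ i) / μ i) • (⟪w, yv i⟫_ℝ) • xv i)
    (z : X) (hz : ‖z‖ ≤ E) (xp : X)
    (hxp : xp = ∑' j : ℕ, ((μ j) ^ (2 * ν)) • (⟪z, xv j⟫_ℝ) • xv j)
    (yδ : Y) (hyδ : ‖yδ - K xp‖ ≤ δ)
    (xαδ : X) (hx : xαδ = R αδ yδ) :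
    ‖xαδ - xp‖ ≤ (c ^ (-(1 / (σ * r))) + c ^ (2 * ν / (σ * r))) *
      E ^ (1 / (2 * ν + 1)) * δ ^ (2 * ν / (2 * ν + 1)) := by
  have hα : 0 < αδ := by rw [hαδ]; positivity
  set a : ℕ → ℝ := fun i => ⟪z, xv i⟫_ℝ with ha_def
  set b : ℕ → ℝ := fun i => ⟪yδ - K xp, yv i⟫_ℝ with hb_def
  set Q : ℕ → ℝ := fun i => q αδ (μ i) with hQ_def
  set cf : ℕ → ℝ := fun j => μ j ^ (2 * ν) * a j with hcf_def
  set A : ℝ := αδ ^ (-(1 / (σ * r))) with hA_def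
  set B : ℝ := αδ ^ (2 * ν / (σ * r)) with hB_def
  have hApos : 0 < A := Real.rpow_pos_of_pos hα _
  have hBpos : 0 < B := Real.rpow_pos_of_pos hα _
  -- Q bounds
  have hQ0 : ∀ i, 0 ≤ Q i := fun i => by
    rw [hQ_def]; simp only []; rw [hq]; exact qfilter_nonneg hα (hμ i)
  have hQ1 : ∀ i, Q i ≤ 1 := fun i => by
    rw [hQ_def]; simp only []; rw [hq]; exact qfilter_le_one hr hα (hμ i)
  have hQA : ∀ i, Q i / μ i ≤ A := fun i => by
    rw [hQ_def, hA_def]; simp only []; rw [hq]; exact qfilter_div_le hσ hr hα (hμ i)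
  have hQB : ∀ i, (1 - Q i) * μ i ^ (2 * ν) ≤ B := fun i => by
    rw [hQ_def, hB_def]; simp only []; rw [hq]; exact qfilter_sub_one_le hr hν hσ hα (hμ i)
  -- Bessel summabilities
  have ha2 : Summable (fun i => a i ^ 2) := by
    have := hxv.inner_products_summable (x := z)
    simpa [ha_def, Real.norm_eq_abs, sq_abs, real_inner_comm] using this
  have hb2 : Summable (fun i => b i ^ 2) := by
    have := hyv.inner_products_summable (x := yδ - K xp)
    simpa [hb_def, Real.norm_eq_abs, sq_abs, real_inner_comm] using this
  have hta2 : ∑' i, a i ^ 2 ≤ E ^ 2 := by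
    have h1 := hxv.tsum_inner_products_le z
    have h2 : ∑' i, a i ^ 2 = ∑' i, ‖⟪xv i, z⟫_ℝ‖ ^ 2 := by
      congr 1; funext i; rw [ha_def]; simp [Real.norm_eq_abs, sq_abs, real_inner_comm]
    rw [h2]
    exact h1.trans (by nlinarith [norm_nonneg z])
  have htb2 : ∑' i, b i ^ 2 ≤ δ ^ 2 := by
    have h1 := hyv.tsum_inner_products_le (yδ - K xp)
    have h2 : ∑' i, b i ^ 2 = ∑' i, ‖⟪yv i, yδ - K xp⟫_ℝ‖ ^ 2 := by
      congr 1; funext i; rw [hb_def]; simp [Real.norm_eq_abs, sq_abs, real_inner_comm]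
    rw [h2]
    exact h1.trans (by nlinarith [norm_nonneg (yδ - K xp)])
  -- singular values bounded
  have hμK : ∀ i, μ i ≤ ‖K‖ := by
    intro i
    have h1 : ‖K (xv i)‖ ≤ ‖K‖ * ‖xv i‖ := K.le_opNorm _
    rw [hKx i, norm_smul, Real.norm_eq_abs, abs_of_pos (hμ i), hyv.1 i, hxv.1 i] at h1
    simpa using h1
  have hKpos : (0:ℝ) < ‖K‖ := lt_of_lt_of_le (hμ 0) (hμK 0)
  have hμ2ν : ∀ i, μ i ^ (2 * ν) ≤ ‖K‖ ^ (2 * ν) := fun i =>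
    Real.rpow_le_rpow (hμ i).le (hμK i) (by positivity)
  -- summability of cf²
  have hcf2 : Summable (fun j => cf j ^ 2) := by
    apply Summable.of_nonneg_of_le (fun j => sq_nonneg _) _ (ha2.mul_left ((‖K‖ ^ (2 * ν)) ^ 2))
    intro j
    rw [hcf_def]
    simp only [mul_pow]
    apply mul_le_mul_of_nonneg_right _ (sq_nonneg _)
    have := hμ2ν j
    nlinarith [Real.rpow_pos_of_pos (hμ j) (2 * ν)]
  have hxp' : xp = ∑' j, cf j • xv j := by
    rw [hxp]; congr 1; funext j; rw [hcf_def, smul_smul]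
  have hxp_sum : Summable (fun j => cf j • xv j) := ortho_summable hxv hcf2
  -- K xp expansion
  have hKxp : K xp = ∑' j, (μ j * cf j) • yv j := by
    rw [hxp', K.map_tsum hxp_sum]
    congr 1; funext j
    rw [map_smul, hKx j, smul_smul, mul_comm]
  have hKcf2 : Summable (fun j => (μ j * cf j) ^ 2) := by
    apply Summable.of_nonneg_of_le (fun j => sq_nonneg _) _ (hcf2.mul_left (‖K‖ ^ 2))
    intro j
    rw [mul_pow]
    apply mul_le_mul_of_nonneg_right _ (sq_nonneg _)
    nlinarith [hμK j, (hμ j).le]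
  have hKxp_sum : Summable (fun j => (μ j * cf j) • yv j) := ortho_summable hyv hKcf2
  have hinnerK : ∀ i, ⟪K xp, yv i⟫_ℝ = μ i * cf i := by
    intro i
    rw [hKxp]
    exact ortho_inner_tsum hyv hKxp_sum i
  -- coefficients of the error
  set u : ℕ → ℝ := fun i => (Q i / μ i) * b i with hu_def
  set w : ℕ → ℝ := fun i => (Q i - 1) * cf i with hw_def
  have hu_abs : ∀ i, |u i| ≤ A * |b i| := by
    intro i
    rw [hu_def]
    simp only [abs_mul]
    apply mul_le_mul_of_nonneg_right _ (abs_nonneg _)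
    rw [abs_of_nonneg (div_nonneg (hQ0 i) (hμ i).le)]
    exact hQA i
  have hw_abs : ∀ i, |w i| ≤ B * |a i| := by
    intro i
    rw [hw_def, hcf_def]
    simp only [abs_mul]
    calc |Q i - 1| * (|μ i ^ (2 * ν)| * |a i|)
        = ((1 - Q i) * μ i ^ (2 * ν)) * |a i| := by
          rw [abs_sub_comm, abs_of_nonneg (by linarith [hQ1 i] : (0:ℝ) ≤ 1 - Q i),
            abs_of_nonneg (Real.rpow_nonneg (hμ i).le _)]
          ring
      _ ≤ B * |a i| := mul_le_mul_of_nonneg_right (hQB i) (abs_nonneg _)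
  have hu2 : Summable (fun i => u i ^ 2) := by
    apply Summable.of_nonneg_of_le (fun i => sq_nonneg _) _ (hb2.mul_left (A ^ 2))
    intro i
    exact abs_sq_le (hu_abs i)
  have hw2 : Summable (fun i => w i ^ 2) := by
    apply Summable.of_nonneg_of_le (fun i => sq_nonneg _) _ (ha2.mul_left (B ^ 2))
    intro i
    exact abs_sq_le (hw_abs i)
  set Tu : X := ∑' i, u i • xv i with hTu_def
  set Tw : X := ∑' i, w i • xv i with hTw_def
  have hTu_norm : ‖Tu‖ ≤ A * δ := by
    have h1 : ‖Tu‖ ^ 2 = ∑' i, u i ^ 2 := ortho_norm_sq hxv hu2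
    have h2 : ∑' i, u i ^ 2 ≤ A ^ 2 * (∑' i, b i ^ 2) := by
      rw [← tsum_mul_left]
      apply Summable.tsum_le_tsum _ hu2 (hb2.mul_left _)
      intro i
      exact abs_sq_le (hu_abs i)
    have h3 : ‖Tu‖ ^ 2 ≤ (A * δ) ^ 2 := by
      rw [h1]
      calc ∑' i, u i ^ 2 ≤ A ^ 2 * (∑' i, b i ^ 2) := h2
        _ ≤ A ^ 2 * δ ^ 2 := mul_le_mul_of_nonneg_left htb2 (by positivity)
        _ = (A * δ) ^ 2 := by ring
    have h4 := Real.sqrt_le_sqrt h3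
    rwa [Real.sqrt_sq (norm_nonneg _), Real.sqrt_sq (by positivity)] at h4
  have hTw_norm : ‖Tw‖ ≤ B * E := by
    have h1 : ‖Tw‖ ^ 2 = ∑' i, w i ^ 2 := ortho_norm_sq hxv hw2
    have h2 : ∑' i, w i ^ 2 ≤ B ^ 2 * (∑' i, a i ^ 2) := by
      rw [← tsum_mul_left]
      apply Summable.tsum_le_tsum _ hw2 (ha2.mul_left _)
      intro i
      exact abs_sq_le (hw_abs i)
    have h3 : ‖Tw‖ ^ 2 ≤ (B * E) ^ 2 := by
      rw [h1]
      calc ∑' i, w i ^ 2 ≤ B ^ 2 * (∑' i, a i ^ 2) := h2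
        _ ≤ B ^ 2 * E ^ 2 := mul_le_mul_of_nonneg_left hta2 (by positivity)
        _ = (B * E) ^ 2 := by ring
    have h4 := Real.sqrt_le_sqrt h3
    rwa [Real.sqrt_sq (norm_nonneg _), Real.sqrt_sq (by positivity)] at h4
  -- decomposition
  set s : ℕ → ℝ := fun i => Q i * cf i with hs_def
  have hs2 : Summable (fun i => s i ^ 2) := by
    apply Summable.of_nonneg_of_le (fun i => sq_nonneg _) _ hcf2
    intro i
    have h1 : Q i ^ 2 ≤ 1 := by
      have := pow_le_pow_left₀ (hQ0 i) (hQ1 i) 2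
      simpa using this
    calc s i ^ 2 = Q i ^ 2 * cf i ^ 2 := by rw [hs_def]; ring
      _ ≤ 1 * cf i ^ 2 := mul_le_mul_of_nonneg_right h1 (sq_nonneg _)
      _ = cf i ^ 2 := one_mul _
  have hxα : xαδ = ∑' i, (u i + s i) • xv i := by
    rw [hx, hR]
    congr 1; funext i
    rw [smul_smul]
    congr 1
    have hyδi : ⟪yδ, yv i⟫_ℝ = b i + μ i * cf i := by
      have : b i = ⟪yδ, yv i⟫_ℝ - ⟪K xp, yv i⟫_ℝ := by rw [hb_def]; simp [inner_sub_left]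
      rw [this, hinnerK i]; ring
    rw [hyδi, hu_def, hs_def]
    have hμi : μ i ≠ 0 := (hμ i).ne'
    field_simp
    ring
  have hsplit : xαδ - xp = Tu + Tw := by
    rw [hxα, hxp', hTu_def, hTw_def]
    have e1 : ∀ i, (u i + s i) • xv i = u i • xv i + s i • xv i := fun i => add_smul _ _ _
    have hus : Summable (fun i => u i • xv i) := ortho_summable hxv hu2
    have hss : Summable (fun i => s i • xv i) := ortho_summable hxv hs2
    have e2 : ∑' i, (u i + s i) • xv i = (∑' i, u i • xv i) + ∑' i, s i • xv i := by
      simp only [e1]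
      exact Summable.tsum_add hus hss
    rw [e2, add_sub_assoc]
    congr 1
    have e3 : ∀ i, s i • xv i - cf i • xv i = w i • xv i := by
      intro i
      rw [← sub_smul]
      congr 1
      rw [hs_def, hw_def]; ring
    rw [← Summable.tsum_sub hss hxp_sum]
    simp only [e3]
  rw [hsplit]
  calc ‖Tu + Tw‖ ≤ ‖Tu‖ + ‖Tw‖ := norm_add_le _ _
    _ ≤ A * δ + B * E := add_le_add hTu_norm hTw_norm
    _ = (c ^ (-(1 / (σ * r))) + c ^ (2 * ν / (σ * r))) *
        E ^ (1 / (2 * ν + 1)) * δ ^ (2 * ν / (2 * ν + 1)) := by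
      rw [hA_def, hB_def, hαδ, arith1 hσ hr hν hE hδ hc, arith2 hσ hr hν hE hδ hc]
      ring
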